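/- Let 𝕂 be a Krein space with fundamental symmetry J and let {f_i : i ∈ I} be a J-frame for 𝕂 with J-frame operator S and canonical J-dual frame {S⁻¹f_i : i ∈ I}. Then for every subset I₁ ⊆ I and every f ∈ 𝕂: Σ_{i∈I₁} σ_i |[f,f_i]|² − Σ_{i∈I} σ_i |[S_{I₁}f, S⁻¹f_i]|² = Σ_{i∈I₁ᶜ} σ_i |[f,f_i]|² − Σ_{i∈I} σ_i |[S_{I₁ᶜ}f, S⁻¹f_i]|², where S_{I₁}f = Σ_{i∈I₁} σ_i [f,f_i] f_i, I₁ᶜ = I ∖ I₁, and σ_i = 1 if i ∈ I₊, σ_i = −1 if i ∈ I₋. -/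

import Mathlib

noncomputable section

open scoped InnerProductSpace ENNReal

attribute [local instance] Classical.propDecidable

namespace JFF

instance : Fact ((1 : ℝ≥0∞) ≤ 2) := ⟨by norm_num⟩

variable {𝕂 : Type*} [NormedAddCommGroup 𝕂] [InnerProductSpace ℂ 𝕂] [CompleteSpace 𝕂]
variable {ι : Type*}

/-- The indefinite inner product `[x, y]` induced by the fundamental symmetry `J`;
with Mathlib's convention (inner products conjugate-linear in the *first* variable),
the paper's `[x, y] = ⟨Jx, y⟩`, which is linear in `x`, is `⟪J y, x⟫_ℂ`. -/
def ip (J : 𝕂 →L[ℂ] 𝕂) (x y : 𝕂) : ℂ := @inner ℂ _ _ (J y) x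

/-- `J` is a fundamental symmetry: a bounded selfadjoint operator with `J ∘ J = 1`. -/
def IsFundSym (J : 𝕂 →L[ℂ] 𝕂) : Prop := IsSelfAdjoint J ∧ J ∘L J = 1

/-- `W` is a `J`-nonnegative subspace. -/
def JNonneg (J : 𝕂 →L[ℂ] 𝕂) (W : Submodule ℂ 𝕂) : Prop :=
  ∀ f ∈ W, 0 ≤ (ip J f f).re

/-- `W` is a `J`-nonpositive subspace. -/
def JNonpos (J : 𝕂 →L[ℂ] 𝕂) (W : Submodule ℂ 𝕂) : Prop :=
  ∀ f ∈ W, (ip J f f).re ≤ 0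

/-- `W` is a `J`-negative subspace. -/
def JNeg (J : 𝕂 →L[ℂ] 𝕂) (W : Submodule ℂ 𝕂) : Prop :=
  ∀ f ∈ W, f ≠ 0 → (ip J f f).re < 0

/-- `W` is uniformly `J`-positive. -/
def UnifJPos (J : 𝕂 →L[ℂ] 𝕂) (W : Submodule ℂ 𝕂) : Prop :=
  ∃ α : ℝ, 0 < α ∧ ∀ f ∈ W, α * ‖f‖ ^ 2 ≤ (ip J f f).re

/-- `W` is uniformly `J`-negative. -/
def UnifJNeg (J : 𝕂 →L[ℂ] 𝕂) (W : Submodule ℂ 𝕂) : Prop :=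
  ∃ α : ℝ, 0 < α ∧ ∀ f ∈ W, (ip J f f).re ≤ -(α * ‖f‖ ^ 2)

/-- `W` is maximal uniformly `J`-positive. -/
def MaxUnifJPos (J : 𝕂 →L[ℂ] 𝕂) (W : Submodule ℂ 𝕂) : Prop :=
  UnifJPos J W ∧ ∀ W' : Submodule ℂ 𝕂, UnifJPos J W' → W ≤ W' → W' = W

/-- `W` is maximal uniformly `J`-negative. -/
def MaxUnifJNeg (J : 𝕂 →L[ℂ] 𝕂) (W : Submodule ℂ 𝕂) : Prop :=
  UnifJNeg J W ∧ ∀ W' : Submodule ℂ 𝕂, UnifJNeg J W' → W ≤ W' → W' = W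

/-- `W` is a maximal `J`-nonnegative subspace. -/
def MaxJNonneg (J : 𝕂 →L[ℂ] 𝕂) (W : Submodule ℂ 𝕂) : Prop :=
  JNonneg J W ∧ ∀ W' : Submodule ℂ 𝕂, JNonneg J W' → W ≤ W' → W' = W

/-- `W` is a maximal `J`-nonpositive subspace. -/
def MaxJNonpos (J : 𝕂 →L[ℂ] 𝕂) (W : Submodule ℂ 𝕂) : Prop :=
  JNonpos J W ∧ ∀ W' : Submodule ℂ 𝕂, JNonpos J W' → W ≤ W' → W' = W

/-- The `J`-orthogonal companion `M^{[⊥]} = {f | [f, m] = 0 ∀ m ∈ M}`. -/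
def JOrth (J : 𝕂 →L[ℂ] 𝕂) (M : Submodule ℂ 𝕂) : Submodule ℂ 𝕂 where
  carrier := {f | ∀ m ∈ M, ip J f m = 0}
  add_mem' := by
    intro a b ha hb m hm
    simp only [ip, inner_add_right] at *
    rw [ha m hm, hb m hm, add_zero]
  zero_mem' := by
    intro m hm
    simp [ip]
  smul_mem' := by
    intro c a ha m hm
    simp only [ip, inner_smul_right] at *
    rw [ha m hm, mul_zero]

/-- A closed subspace is regular (projectively complete) if `𝕂 = M ⊕ M^{[⊥]}`. -/
def Regular (J : 𝕂 →L[ℂ] 𝕂) (M : Submodule ℂ 𝕂) : Prop :=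
  IsClosed (M : Set 𝕂) ∧ IsCompl M (JOrth J M)

/-- The orthogonal projection `π_M` onto `M` as an endomorphism of `𝕂`
(junk value `0` if `M` is not closed). -/
def pr (M : Submodule ℂ 𝕂) : 𝕂 →L[ℂ] 𝕂 :=
  if h : IsClosed (M : Set 𝕂) then
    letI : CompleteSpace M := h.completeSpace_coe
    M.subtypeL ∘L M.orthogonalProjection
  else 0

/-- The Gramian operator `G_M = π_M ∘ J|_M : M → M`
(junk value `0` if `M` is not closed). -/
def gram (J : 𝕂 →L[ℂ] 𝕂) (M : Submodule ℂ 𝕂) : M →L[ℂ] M :=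
  if h : IsClosed (M : Set 𝕂) then
    letI : CompleteSpace M := h.completeSpace_coe
    M.orthogonalProjection ∘L (J ∘L M.subtypeL)
  else 0

/-- The reduced minimum modulus `γ(T) = inf {‖Tx‖ : x ∈ N(T)ᗮ, ‖x‖ = 1}`. -/
def rmm {E F : Type*} [NormedAddCommGroup E] [InnerProductSpace ℂ E]
    [NormedAddCommGroup F] [InnerProductSpace ℂ F] (T : E →L[ℂ] F) : ℝ :=
  sInf ((fun x => ‖T x‖) '' {x | x ∈ (LinearMap.ker (T : E →ₗ[ℂ] F))ᗮ ∧ ‖x‖ = 1})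

/-- `M_S`: the closure of `Σ_{i ∈ S} W i`. -/
def Mspace (W : ι → Submodule ℂ 𝕂) (S : Set ι) : Submodule ℂ 𝕂 :=
  (⨆ i ∈ S, W i).topologicalClosure

/-- The closed span of `{f i : i ∈ S}`. -/
def Mspan (f : ι → 𝕂) (S : Set ι) : Submodule ℂ 𝕂 :=
  (Submodule.span ℂ (f '' S)).topologicalClosure

/-- The subspace of the ℓ²-direct sum consisting of families supported on `S`. -/
def supp (W : ι → Submodule ℂ 𝕂) (S : Set ι) :
    Submodule ℂ (lp (fun i => W i) 2) where
  carrier := {x | ∀ i ∉ S, x i = 0}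
  add_mem' := by
    intro a b ha hb i hi
    have h : (a + b : lp (fun i => W i) 2) i = a i + b i := by
      rw [lp.coeFn_add]; rfl
    rw [h, ha i hi, hb i hi, add_zero]
  zero_mem' := by
    intro i hi
    have h : (0 : lp (fun i => W i) 2) i = 0 := by
      rw [lp.coeFn_zero]; rfl
    rw [h]
  smul_mem' := by
    intro c a ha i hi
    have h : (c • a : lp (fun i => W i) 2) i = c • a i := by
      rw [lp.coeFn_smul]; rfl
    rw [h, ha i hi, smul_zero]

/-- `T` is the synthesis operator of the weighted family of subspaces `(W, v)`:
`T {f_i} = Σ_i v_i f_i` (an unconditionally convergent sum). -/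
def IsSynth (W : ι → Submodule ℂ 𝕂) (v : ι → ℝ)
    (T : lp (fun i => W i) 2 →L[ℂ] 𝕂) : Prop :=
  ∀ x : lp (fun i => W i) 2, HasSum (fun i => (v i : ℂ) • (x i : 𝕂)) (T x)

/-- The range of `T ∘ P_S` where `P_S` is the orthogonal projection onto the
families supported on `S`, i.e. the image under `T` of the families supported on `S`. -/
def rng {W : ι → Submodule ℂ 𝕂} (T : lp (fun i => W i) 2 →L[ℂ] 𝕂)
    (S : Set ι) : Submodule ℂ 𝕂 :=
  (supp W S).map (T : lp (fun i => W i) 2 →ₗ[ℂ] 𝕂)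

/-- `(W, v)` (with the partition `Ipos`, `Ineg` of the index set and synthesis
operator `T`) is a `J`-fusion frame for `𝕂`. -/
structure IsJFusionFrame (J : 𝕂 →L[ℂ] 𝕂) (W : ι → Submodule ℂ 𝕂) (v : ι → ℝ)
    (Ipos Ineg : Set ι) (T : lp (fun i => W i) 2 →L[ℂ] 𝕂) : Prop where
  partition : ∀ i : ι, (i ∈ Ipos ∧ i ∉ Ineg) ∨ (i ∈ Ineg ∧ i ∉ Ipos)
  pos_nonneg : ∀ i ∈ Ipos, JNonneg J (W i)
  neg_neg : ∀ i ∈ Ineg, JNeg J (W i)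
  weights : ∀ i, 0 < v i
  synth : IsSynth W v T
  max_pos : MaxUnifJPos J (rng T Ipos)
  max_neg : MaxUnifJNeg J (rng T Ineg)

/-- `Bm ≤ Am < 0 < Ap ≤ Bp` are `J`-fusion frame bounds for `(W, v)`:
`A_± [f,f] ≤ Σ_{i ∈ I_±} v_i² |[π_{W_i} J f, f]| ≤ B_± [f,f]` for `f ∈ M_±`. -/
def JFusionBounds (J : 𝕂 →L[ℂ] 𝕂) (W : ι → Submodule ℂ 𝕂) (v : ι → ℝ)
    (Ipos Ineg : Set ι) (Bm Am Ap Bp : ℝ) : Prop :=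
  Bm ≤ Am ∧ Am < 0 ∧ 0 < Ap ∧ Ap ≤ Bp ∧
  (∀ f ∈ Mspace W Ipos,
    Summable (fun i : Ipos => v (i : ι) ^ 2 * ‖ip J (pr (W (i : ι)) (J f)) f‖) ∧
    Ap * (ip J f f).re ≤ ∑' i : Ipos, v (i : ι) ^ 2 * ‖ip J (pr (W (i : ι)) (J f)) f‖ ∧
    ∑' i : Ipos, v (i : ι) ^ 2 * ‖ip J (pr (W (i : ι)) (J f)) f‖ ≤ Bp * (ip J f f).re) ∧
  (∀ f ∈ Mspace W Ineg,
    Summable (fun i : Ineg => v (i : ι) ^ 2 * ‖ip J (pr (W (i : ι)) (J f)) f‖) ∧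
    Am * (ip J f f).re ≤ ∑' i : Ineg, v (i : ι) ^ 2 * ‖ip J (pr (W (i : ι)) (J f)) f‖ ∧
    ∑' i : Ineg, v (i : ι) ^ 2 * ‖ip J (pr (W (i : ι)) (J f)) f‖ ≤ Bm * (ip J f f).re)

/-- `(Bm, Am, Ap, Bp)` are the *optimal* `J`-fusion frame bounds. -/
def OptJFusionBounds (J : 𝕂 →L[ℂ] 𝕂) (W : ι → Submodule ℂ 𝕂) (v : ι → ℝ)
    (Ipos Ineg : Set ι) (Bm Am Ap Bp : ℝ) : Prop :=
  JFusionBounds J W v Ipos Ineg Bm Am Ap Bp ∧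
  ∀ Bm' Am' Ap' Bp' : ℝ, JFusionBounds J W v Ipos Ineg Bm' Am' Ap' Bp' →
    Bm' ≤ Bm ∧ Am ≤ Am' ∧ Ap' ≤ Ap ∧ Bp ≤ Bp'

/-- `{f i}` (with the partition `Ipos`, `Ineg` of the index set) is a `J`-frame for `𝕂`. -/
structure IsJFrame (J : 𝕂 →L[ℂ] 𝕂) (f : ι → 𝕂) (Ipos Ineg : Set ι) : Prop where
  partition : ∀ i : ι, (i ∈ Ipos ∧ i ∉ Ineg) ∨ (i ∈ Ineg ∧ i ∉ Ipos)
  nonneg : ∀ i ∈ Ipos, 0 ≤ (ip J (f i) (f i)).re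
  neg : ∀ i ∈ Ineg, (ip J (f i) (f i)).re < 0
  frame : ∃ C D : ℝ, 0 < C ∧ C ≤ D ∧ ∀ g : 𝕂,
    Summable (fun i => ‖@inner ℂ _ _ g (f i)‖ ^ 2) ∧
    C * ‖g‖ ^ 2 ≤ ∑' i, ‖@inner ℂ _ _ g (f i)‖ ^ 2 ∧
    ∑' i, ‖@inner ℂ _ _ g (f i)‖ ^ 2 ≤ D * ‖g‖ ^ 2
  max_pos : MaxUnifJPos J (Mspan f Ipos)
  max_neg : MaxUnifJNeg J (Mspan f Ineg)

/-- `Bm ≤ Am < 0 < Ap ≤ Bp` are `J`-frame bounds for `{f i}`: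
`A_± [g,g] ≤ Σ_{i ∈ I_±} |[g, f i]|² ≤ B_± [g,g]` for `g ∈ M_±`. -/
def JFrameBounds (J : 𝕂 →L[ℂ] 𝕂) (f : ι → 𝕂) (Ipos Ineg : Set ι)
    (Bm Am Ap Bp : ℝ) : Prop :=
  Bm ≤ Am ∧ Am < 0 ∧ 0 < Ap ∧ Ap ≤ Bp ∧
  (∀ g ∈ Mspan f Ipos,
    Summable (fun i : Ipos => ‖ip J g (f (i : ι))‖ ^ 2) ∧
    Ap * (ip J g g).re ≤ ∑' i : Ipos, ‖ip J g (f (i : ι))‖ ^ 2 ∧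
    ∑' i : Ipos, ‖ip J g (f (i : ι))‖ ^ 2 ≤ Bp * (ip J g g).re) ∧
  (∀ g ∈ Mspan f Ineg,
    Summable (fun i : Ineg => ‖ip J g (f (i : ι))‖ ^ 2) ∧
    Am * (ip J g g).re ≤ ∑' i : Ineg, ‖ip J g (f (i : ι))‖ ^ 2 ∧
    ∑' i : Ineg, ‖ip J g (f (i : ι))‖ ^ 2 ≤ Bm * (ip J g g).re)

/-- `(Bm, Am, Ap, Bp)` are the *optimal* `J`-frame bounds. -/
def OptJFrameBounds (J : 𝕂 →L[ℂ] 𝕂) (f : ι → 𝕂) (Ipos Ineg : Set ι)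
    (Bm Am Ap Bp : ℝ) : Prop :=
  JFrameBounds J f Ipos Ineg Bm Am Ap Bp ∧
  ∀ Bm' Am' Ap' Bp' : ℝ, JFrameBounds J f Ipos Ineg Bm' Am' Ap' Bp' →
    Bm' ≤ Bm ∧ Am ≤ Am' ∧ Ap' ≤ Ap ∧ Bp ≤ Bp'



section Aux

lemma ip_conj (J : 𝕂 →L[ℂ] 𝕂) (hJ : IsSelfAdjoint J) (x y : 𝕂) :
    ip J x y = starRingEnd ℂ (ip J y x) := by
  have hs := ContinuousLinearMap.isSelfAdjoint_iff_isSymmetric.mp hJ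
  simp only [ip]
  rw [← inner_conj_symm]
  exact congrArg (starRingEnd ℂ) (hs x y).symm

lemma ip_sub_left (J : 𝕂 →L[ℂ] 𝕂) (x y z : 𝕂) :
    ip J (x - y) z = ip J x z - ip J y z := by
  simp [ip, inner_sub_right]

lemma ip_sub_right (J : 𝕂 →L[ℂ] 𝕂) (x y z : 𝕂) :
    ip J x (y - z) = ip J x y - ip J x z := by
  simp [ip, map_sub, inner_sub_left]

lemma keyA {κ : Type*} (J : 𝕂 →L[ℂ] 𝕂) (hJ : IsSelfAdjoint J) (w : κ → 𝕂) (ε : κ → ℝ)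
    (g T : 𝕂) (h : HasSum (fun k => ((ε k : ℂ) * ip J g (w k)) • w k) T) :
    HasSum (fun k => ε k * ‖ip J g (w k)‖ ^ 2) (ip J T g).re := by
  have h2 := (h.mapL (innerSL ℂ (J g))).mapL Complex.reCLM
  convert h2 using 2 with k
  simp only [innerSL_apply_apply, inner_smul_right, Complex.reCLM_apply]
  rw [show @inner ℂ _ _ (J g) (w k) = starRingEnd ℂ (ip J g (w k)) from
    ip_conj J hJ (w k) g]
  rw [mul_assoc, Complex.mul_conj]
  rw [show ((Complex.normSq (ip J g (w k)) : ℂ)) = ((‖ip J g (w k)‖ ^ 2 : ℝ) : ℂ) by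
    rw [Complex.normSq_eq_norm_sq]]
  rw [← Complex.ofReal_mul, Complex.ofReal_re]
  rfl

lemma keyB {κ : Type*} (J : 𝕂 →L[ℂ] 𝕂) (hJ : IsSelfAdjoint J) (w : κ → 𝕂) (ε : κ → ℝ)
    (g h T U : 𝕂)
    (hT : HasSum (fun k => ((ε k : ℂ) * ip J g (w k)) • w k) T)
    (hU : HasSum (fun k => ((ε k : ℂ) * ip J h (w k)) • w k) U) :
    ip J T h = ip J g U := by
  have h1 := hT.mapL (innerSL ℂ (J h))
  have h3 := (hU.mapL (innerSL ℂ (J g))).map (starRingEnd ℂ).toAddMonoidHom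
    Complex.continuous_conj
  have e : (fun k => ((innerSL ℂ) (J h)) (((ε k : ℂ) * ip J g (w k)) • w k))
      = ⇑(starRingEnd ℂ).toAddMonoidHom ∘
        (fun b => ((innerSL ℂ) (J g)) (((ε b : ℂ) * ip J h (w b)) • w b)) := by
    funext k
    simp only [Function.comp_apply, RingHom.toAddMonoidHom_eq_coe, AddMonoidHom.coe_coe,
      innerSL_apply_apply, inner_smul_right, map_mul, Complex.conj_ofReal]
    rw [show @inner ℂ _ _ (J h) (w k) = starRingEnd ℂ (ip J h (w k)) from
      ip_conj J hJ (w k) h,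
      show @inner ℂ _ _ (J g) (w k) = starRingEnd ℂ (ip J g (w k)) from
      ip_conj J hJ (w k) g]
    simp only [Complex.conj_conj]
    ring
  rw [e] at h1
  have h4 := h1.unique h3
  rw [show ip J T h = ((innerSL ℂ) (J h)) T from rfl, h4]
  exact (ip_conj J hJ g U).symm

end Aux

/-- (Fundamental identity for `J`-frames.) Let `{f i}` be a `J`-frame
with `J`-frame operator `S`, canonical `J`-dual `{S⁻¹ f i}` and partial frame operators
`S_{I₁} g = Σ_{i∈I₁} σ_i [g, f i] f i`. Then for every `I₁ ⊆ I` and every `g ∈ 𝕂`: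
`Σ_{i∈I₁} σ_i |[g,f i]|² - Σ_{i∈I} σ_i |[S_{I₁}g, S⁻¹f i]|²
  = Σ_{i∈I₁ᶜ} σ_i |[g,f i]|² - Σ_{i∈I} σ_i |[S_{I₁ᶜ}g, S⁻¹f i]|²`. -/
theorem stmt13 {𝕂 : Type*} [NormedAddCommGroup 𝕂] [InnerProductSpace ℂ 𝕂] [CompleteSpace 𝕂]
    {ι : Type*} (J : 𝕂 →L[ℂ] 𝕂) (hJ : IsFundSym J)
    (f : ι → 𝕂) (Ipos Ineg : Set ι)
    (hF : IsJFrame J f Ipos Ineg)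
    (S Sinv : 𝕂 →L[ℂ] 𝕂)
    (hS : ∀ g : 𝕂,
      HasSum (fun i : ι => ((if i ∈ Ipos then (1 : ℂ) else -1) * ip J g (f i)) • f i) (S g))
    (hSinv : Sinv ∘L S = 1 ∧ S ∘L Sinv = 1)
    (SI : Set ι → 𝕂 →L[ℂ] 𝕂)
    (hSI : ∀ (I₁ : Set ι) (g : 𝕂),
      HasSum (fun i : I₁ =>
        ((if (i : ι) ∈ Ipos then (1 : ℂ) else -1) * ip J g (f (i : ι))) • f (i : ι))
        (SI I₁ g)) :
    ∀ (I₁ : Set ι) (g : 𝕂),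
      (∑' i : I₁, (if (i : ι) ∈ Ipos then (1 : ℝ) else -1) * ‖ip J g (f (i : ι))‖ ^ 2)
        - ∑' i : ι, (if i ∈ Ipos then (1 : ℝ) else -1) * ‖ip J (SI I₁ g) (Sinv (f i))‖ ^ 2
      = (∑' i : (I₁ᶜ : Set ι),
            (if (i : ι) ∈ Ipos then (1 : ℝ) else -1) * ‖ip J g (f (i : ι))‖ ^ 2)
        - ∑' i : ι, (if i ∈ Ipos then (1 : ℝ) else -1) * ‖ip J (SI I₁ᶜ g) (Sinv (f i))‖ ^ 2 := by
  intro I₁ g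
  classical
  have hcoef : ∀ i : ι, (((if i ∈ Ipos then (1 : ℝ) else -1) : ℝ) : ℂ)
      = (if i ∈ Ipos then (1 : ℂ) else -1) := fun i => by split_ifs <;> simp
  set σ : ι → ℝ := fun i => if i ∈ Ipos then (1 : ℝ) else -1 with hσ
  have hS' : ∀ h : 𝕂, HasSum (fun i : ι => ((σ i : ℂ) * ip J h (f i)) • f i) (S h) := by
    intro h; simpa only [hσ, hcoef] using hS h
  have hSI' : ∀ (I₂ : Set ι) (h : 𝕂),
      HasSum (fun i : I₂ => ((σ (i : ι) : ℂ) * ip J h (f (i : ι))) • f (i : ι)) (SI I₂ h) := by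
    intro I₂ h; simpa only [hσ, hcoef] using hSI I₂ h
  have hSsa : ∀ x y : 𝕂, ip J (S x) y = ip J x (S y) := fun x y =>
    keyB J hJ.1 f σ x y (S x) (S y) (hS' x) (hS' y)
  have hSinvS : ∀ z : 𝕂, Sinv (S z) = z := fun z => by
    have := ContinuousLinearMap.ext_iff.mp hSinv.1 z; simpa using this
  have hSSinv : ∀ z : 𝕂, S (Sinv z) = z := fun z => by
    have := ContinuousLinearMap.ext_iff.mp hSinv.2 z; simpa using this
  have hSinvsa : ∀ x y : 𝕂, ip J x (Sinv y) = ip J (Sinv x) y := by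
    intro x y
    conv_lhs => rw [← hSSinv x]
    rw [hSsa (Sinv x) (Sinv y), hSSinv y]
  have hsplit : S g = SI I₁ g + SI I₁ᶜ g :=
    (hS g).unique (HasSum.add_compl (hSI I₁ g) (hSI I₁ᶜ g))
  have t1 := (keyA J hJ.1 (fun i : I₁ => f (i : ι)) (fun i : I₁ => σ (i : ι)) g (SI I₁ g)
    (hSI' I₁ g)).tsum_eq
  have t3 := (keyA J hJ.1 (fun i : (I₁ᶜ : Set ι) => f (i : ι))
    (fun i : (I₁ᶜ : Set ι) => σ (i : ι)) g (SI I₁ᶜ g) (hSI' I₁ᶜ g)).tsum_eq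
  have t2 : (∑' i : ι, σ i * ‖ip J (SI I₁ g) (Sinv (f i))‖ ^ 2)
      = (ip J (SI I₁ g) (Sinv (SI I₁ g))).re := by
    have hk := keyA J hJ.1 f σ (Sinv (SI I₁ g)) (S (Sinv (SI I₁ g))) (hS' (Sinv (SI I₁ g)))
    rw [hSSinv (SI I₁ g)] at hk
    rw [← hk.tsum_eq]
    exact tsum_congr fun i => by rw [hSinvsa (SI I₁ g) (f i)]
  have t4 : (∑' i : ι, σ i * ‖ip J (SI I₁ᶜ g) (Sinv (f i))‖ ^ 2)
      = (ip J (SI I₁ᶜ g) (Sinv (SI I₁ᶜ g))).re := by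
    have hk := keyA J hJ.1 f σ (Sinv (SI I₁ᶜ g)) (S (Sinv (SI I₁ᶜ g))) (hS' (Sinv (SI I₁ᶜ g)))
    rw [hSSinv (SI I₁ᶜ g)] at hk
    rw [← hk.tsum_eq]
    exact tsum_congr fun i => by rw [hSinvsa (SI I₁ᶜ g) (f i)]
  rw [show (∑' i : I₁, (if (i : ι) ∈ Ipos then (1 : ℝ) else -1) * ‖ip J g (f (i : ι))‖ ^ 2)
      = (ip J (SI I₁ g) g).re from t1,
    show (∑' i : (I₁ᶜ : Set ι), (if (i : ι) ∈ Ipos then (1 : ℝ) else -1)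
        * ‖ip J g (f (i : ι))‖ ^ 2) = (ip J (SI I₁ᶜ g) g).re from t3,
    show (∑' i : ι, (if i ∈ Ipos then (1 : ℝ) else -1) * ‖ip J (SI I₁ g) (Sinv (f i))‖ ^ 2)
      = (ip J (SI I₁ g) (Sinv (SI I₁ g))).re from t2,
    show (∑' i : ι, (if i ∈ Ipos then (1 : ℝ) else -1) * ‖ip J (SI I₁ᶜ g) (Sinv (f i))‖ ^ 2)
      = (ip J (SI I₁ᶜ g) (Sinv (SI I₁ᶜ g))).re from t4]
  have h₂eq : SI I₁ᶜ g = S g - SI I₁ g := by rw [hsplit]; abel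
  have hc : (ip J g (SI I₁ g)).re = (ip J (SI I₁ g) g).re := by
    rw [ip_conj J hJ.1 g (SI I₁ g), Complex.conj_re]
  have exp1 : ip J (SI I₁ᶜ g) g = ip J (S g) g - ip J (SI I₁ g) g := by
    rw [h₂eq, ip_sub_left]
  have exp2 : ip J (SI I₁ᶜ g) (Sinv (SI I₁ᶜ g))
      = ip J (S g) g - ip J g (SI I₁ g) - ip J (SI I₁ g) g
        + ip J (SI I₁ g) (Sinv (SI I₁ g)) := by
    rw [h₂eq, map_sub, hSinvS g, ip_sub_left, ip_sub_right, ip_sub_right,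
      hSinvsa (S g) (SI I₁ g), hSinvS g]
    ring
  rw [exp1, exp2]
  simp only [Complex.sub_re, Complex.add_re]
  linarith [hc]


end JFF
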